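/- For the Schwarzschild conformal factor φ(γ) = 1 + m/(2γ) with m > 0, the equation (1/(γ φ(γ)²))·(1 - m/(γφ(γ))) = 1 has exactly one solution γ > 0 when m = 3^{-3/2}, no solutions when m > 3^{-3/2}, and exactly two solutions when 0 < m < 3^{-3/2}. -/

import Mathlib

/-- The set of radii `γ > 0` at which the boundary circle of the spherical-cap disc
in the spatial Schwarzschild manifold of mass `m` has geodesic curvature `1`,
where `φ(γ) = 1 + m/(2γ)` is the Schwarzschild conformal factor. -/
def schwarzschildRadii (m : ℝ) : Set ℝ :=
  {γ : ℝ | 0 < γ ∧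
    (1 / (γ * (1 + m / (2 * γ)) ^ 2)) * (1 - m / (γ * (1 + m / (2 * γ)))) = 1}

lemma schw_red (m γ : ℝ) (hm : 0 < m) (hγ : 0 < γ) :
    (1 / (γ * (1 + m / (2 * γ)) ^ 2)) * (1 - m / (γ * (1 + m / (2 * γ)))) = 1 ↔
    (γ + m/2)^3 - γ^2 + (m/2)*γ = 0 := by
  have h1 : 0 < 1 + m / (2 * γ) := by positivity
  have h2 : (1 + m / (2 * γ)) = (γ + m/2)/γ := by field_simp
  rw [h2]
  have h3 : 0 < γ + m/2 := by linarith
  have h4 : γ * ((γ + m/2)/γ) = γ + m/2 := by field_simp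
  have h5 : γ * ((γ + m/2)^2/γ^2) = (γ + m/2)^2/γ := by
    rw [eq_div_iff (ne_of_gt hγ)]; field_simp
  rw [div_pow, h4, h5]
  have h6 : 1 - m/(γ + m/2) = (γ - m/2)/(γ + m/2) := by
    rw [sub_div' (ne_of_gt h3)]; congr 1; ring
  rw [h6, one_div, inv_mul_eq_div, div_eq_one_iff_eq (by positivity)]
  rw [div_eq_div_iff (ne_of_gt h3) (ne_of_gt hγ)]
  constructor <;> intro h <;> linarith [h]

lemma schw_mem (m γ : ℝ) (hm : 0 < m) :
    γ ∈ schwarzschildRadii m ↔ 0 < γ ∧ (γ + m/2)^3 - γ^2 + (m/2)*γ = 0 := by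
  constructor
  · rintro ⟨h1, h2⟩; exact ⟨h1, (schw_red m γ hm h1).1 h2⟩
  · rintro ⟨h1, h2⟩; exact ⟨h1, (schw_red m γ hm h1).2 h2⟩

/-- At most two positive roots of the cubic. -/
lemma schw_three_roots (m x y z : ℝ) (hm : 0 < m) (hx : 0 < x) (hy : 0 < y) (hz : 0 < z)
    (hxy : x ≠ y) (hyz : y ≠ z) (hxz : x ≠ z)
    (ex : (x + m/2)^3 - x^2 + (m/2)*x = 0)
    (ey : (y + m/2)^3 - y^2 + (m/2)*y = 0)
    (ez : (z + m/2)^3 - z^2 + (m/2)*z = 0) : False := by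
  have A : x^2 + x*y + y^2 + (3*(m/2)-1)*(x+y) + (3*(m/2)^2 + m/2) = 0 := by
    have h : (x - y) * (x^2 + x*y + y^2 + (3*(m/2)-1)*(x+y) + (3*(m/2)^2 + m/2)) = 0 := by
      linear_combination ex - ey
    exact (mul_eq_zero.mp h).resolve_left (sub_ne_zero.mpr hxy)
  have C : x^2 + x*z + z^2 + (3*(m/2)-1)*(x+z) + (3*(m/2)^2 + m/2) = 0 := by
    have h : (x - z) * (x^2 + x*z + z^2 + (3*(m/2)-1)*(x+z) + (3*(m/2)^2 + m/2)) = 0 := by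
      linear_combination ex - ez
    exact (mul_eq_zero.mp h).resolve_left (sub_ne_zero.mpr hxz)
  have E1 : x + y + z = 1 - 3*(m/2) := by
    have h : (y - z) * (x + y + z + (3*(m/2)-1)) = 0 := by linear_combination A - C
    have h2 := (mul_eq_zero.mp h).resolve_left (sub_ne_zero.mpr hyz)
    linarith
  have e2 : x*y + y*z + z*x = 3*(m/2)^2 + m/2 := by
    linear_combination (-1) * A + (x+y) * E1
  have hc0 : x*y*z + (m/2)^3 = 0 := by
    linear_combination ex + (-x^2) * E1 + x * e2
  nlinarith [mul_pos (mul_pos hx hy) hz, pow_pos (half_pos hm) 3]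

theorem schwarzschild_geodesic_curvature_solutions (m : ℝ) (hm : 0 < m) :
    (m = (Real.sqrt 27)⁻¹ → (schwarzschildRadii m).ncard = 1) ∧
    ((Real.sqrt 27)⁻¹ < m → schwarzschildRadii m = ∅) ∧
    (m < (Real.sqrt 27)⁻¹ → (schwarzschildRadii m).ncard = 2) := by
  set s := Real.sqrt 3 with hs_def
  have hs0 : 0 < s := Real.sqrt_pos.mpr (by norm_num)
  have hs2 : s^2 = 3 := Real.sq_sqrt (by norm_num)
  have hs17 : 1.7 < s := by nlinarith
  have hs18 : s < 1.8 := by nlinarith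
  have h27 : Real.sqrt 27 = 3 * s := by
    rw [show (27:ℝ) = 3^2 * 3 by norm_num, Real.sqrt_mul (by positivity), hs_def,
      Real.sqrt_sq (by norm_num)]
  have hcrit : (Real.sqrt 27)⁻¹ = s/9 := by
    rw [h27]
    exact inv_eq_of_mul_eq_one_right (by linear_combination hs2/3)
  -- the key factorization at the critical mass
  have fact : ∀ γ : ℝ, (γ + s/18)^3 - γ^2 + (s/18)*γ
      = (γ - (2*s+3)/18)^2 * (γ + (7*s-12)/18) := by
    intro γ
    linear_combination (γ/12 - s/216 - 1/162) * hs2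
  have hq : 0 < (7*s-12)/18 := by nlinarith
  refine ⟨?_, ?_, ?_⟩
  · -- critical case: exactly one solution
    intro hmc
    rw [hcrit] at hmc
    have hset : schwarzschildRadii m = {(2*s+3)/18} := by
      ext γ
      rw [schw_mem m γ hm, Set.mem_singleton_iff]
      constructor
      · rintro ⟨h1, h2⟩
        rw [hmc] at h2
        have h3 : m/2 = s/18 := by rw [hmc]; ring
        rw [show γ + s/9/2 = γ + s/18 by ring, show s/9/2 = s/18 by ring] at h2
        rw [fact γ] at h2
        have h4 : 0 < γ + (7*s-12)/18 := by linarith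
        have h5 : (γ - (2*s+3)/18)^2 = 0 := by
          rcases mul_eq_zero.mp h2 with h | h
          · exact h
          · linarith
        have := pow_eq_zero_iff (n := 2) (by norm_num) |>.mp h5
        linarith [sub_eq_zero.mp this]
      · intro h
        subst h
        constructor
        · positivity
        · rw [hmc]
          linear_combination (5/648 + s/216) * hs2
    rw [hset, Set.ncard_singleton]
  · -- supercritical: no solutions
    intro hmc
    rw [hcrit] at hmc
    ext γ
    simp only [Set.mem_empty_iff_false, iff_false]
    intro hγ
    rw [schw_mem m γ hm] at hγ
    obtain ⟨h1, h2⟩ := hγ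
    have key : 0 ≤ (γ + s/18)^3 - γ^2 + (s/18)*γ := by
      rw [fact γ]
      have : 0 < γ + (7*s-12)/18 := by linarith
      positivity
    have ha : s/18 < m/2 := by linarith
    have hdiff : (γ + m/2)^3 - γ^2 + (m/2)*γ
        = ((γ + s/18)^3 - γ^2 + (s/18)*γ) + (m/2 - s/18)*(3*γ^2+γ)
          + 3*((m/2)^2 - (s/18)^2)*γ + ((m/2)^3 - (s/18)^3) := by ring
    have t1 : 0 < (m/2 - s/18)*(3*γ^2+γ) := by
      apply mul_pos (by linarith) (by positivity)
    have t2 : 0 ≤ 3*((m/2)^2 - (s/18)^2)*γ := by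
      have : (0:ℝ) ≤ (m/2)^2 - (s/18)^2 := by nlinarith
      positivity
    have t3 : (0:ℝ) ≤ (m/2)^3 - (s/18)^3 := by
      have := pow_le_pow_left₀ (by positivity : (0:ℝ) ≤ s/18) (le_of_lt ha) 3
      linarith
    linarith [key, t1, t2, t3]
  · -- subcritical: exactly two solutions
    intro hmc
    rw [hcrit] at hmc
    set P : ℝ → ℝ := fun γ => (γ + m/2)^3 - γ^2 + (m/2)*γ with hP
    have hcont : Continuous P := by fun_prop
    set γp : ℝ := (m/2)*(2+s) with hγp
    have hγp_pos : 0 < γp := by positivity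
    have hγp_lt : γp < 2 := by nlinarith
    have hP0 : 0 < P 0 := by
      have h : P 0 = (m/2)^3 := by show (0 + m/2)^3 - 0^2 + (m/2)*0 = (m/2)^3; ring
      rw [h]; positivity
    have hPγp : P γp < 0 := by
      have hval : P γp = (m/2)^2 * ((54+30*s)*(m/2) - (5+3*s)) := by
        simp only [hP, hγp]
        linear_combination (9*(m/2)^3 + (m/2)^3*s - (m/2)^2) * hs2
      rw [hval]
      have h2 : (54+30*s)*(m/2) - (5+3*s) < 0 := by nlinarith
      have h3 : 0 < (m/2)^2 := by positivity
      nlinarith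
    have hP2 : 0 < P 2 := by
      show 0 < (2 + m/2)^3 - 2^2 + (m/2)*2
      nlinarith [hm, sq_nonneg m, mul_pos hm hm, mul_pos (mul_pos hm hm) hm]
    -- first root in (0, γp)
    obtain ⟨x, hxmem, hxval⟩ := intermediate_value_Ioo' (le_of_lt hγp_pos)
      hcont.continuousOn (show (0:ℝ) ∈ Set.Ioo (P γp) (P 0) from ⟨hPγp, hP0⟩)
    -- second root in (γp, 2)
    obtain ⟨y, hymem, hyval⟩ := intermediate_value_Ioo (le_of_lt hγp_lt)
      hcont.continuousOn (show (0:ℝ) ∈ Set.Ioo (P γp) (P 2) from ⟨hPγp, hP2⟩)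
    have hx0 : 0 < x := hxmem.1
    have hy0 : 0 < y := lt_trans hγp_pos hymem.1
    have hxy : x ≠ y := ne_of_lt (lt_trans hxmem.2 hymem.1)
    have hset : schwarzschildRadii m = {x, y} := by
      ext γ
      rw [schw_mem m γ hm]
      constructor
      · rintro ⟨h1, h2⟩
        by_contra hcon
        simp only [Set.mem_insert_iff, Set.mem_singleton_iff, not_or] at hcon
        obtain ⟨hγx, hγy⟩ := hcon
        exact schw_three_roots m γ x y hm h1 hx0 hy0 hγx (hxy) hγy h2 hxval hyval
      · rintro (h | h) <;> subst h
        · exact ⟨hx0, hxval⟩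
        · exact ⟨hy0, hyval⟩
    rw [hset, Set.ncard_pair hxy]
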